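/- For every n ∈ ℕ, the regularized Mellin transform of log(x)/(1−x) satisfies ∫₀¹ (xⁿ − 1) · log(x)/(1−x) dx = Σ_{i=1}^{n} 1/i². -/

import Mathlib

open MeasureTheory Real

section Aux
open Set Filter Topology intervalIntegral
-- integrability of x^k * log x on (0,1)
lemma aux_integrable (k : ℕ) :
    IntervalIntegrable (fun x : ℝ => x ^ k * Real.log x) volume 0 1 := by
  have hg : IntervalIntegrable (fun x : ℝ => 2 * x ^ (-(1:ℝ)/2)) volume 0 1 :=
    (intervalIntegrable_rpow' (by norm_num)).const_mul 2
  refine hg.mono_fun ?_ ?_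
  · exact ((measurable_id.pow_const k).mul Real.measurable_log).aestronglyMeasurable.restrict
  · rw [Filter.EventuallyLE, ae_restrict_iff' measurableSet_uIoc]
    refine Eventually.of_forall fun x hx => ?_
    rw [Set.uIoc_of_le (by norm_num : (0:ℝ) ≤ 1)] at hx
    obtain ⟨hx0, hx1⟩ := hx
    have hlog : Real.log x ≤ 0 := Real.log_nonpos hx0.le hx1
    have hb : -Real.log x ≤ 2 * x ^ (-(1:ℝ)/2) := by
      have : Real.log (x ^ (-(1:ℝ)/2)) ≤ x ^ (-(1:ℝ)/2) - 1 :=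
        Real.log_le_sub_one_of_pos (Real.rpow_pos_of_pos hx0 _)
      rw [Real.log_rpow hx0] at this
      nlinarith [Real.rpow_pos_of_pos hx0 (-(1:ℝ)/2)]
    have hxk : x ^ k ≤ 1 := pow_le_one₀ hx0.le hx1
    have hxk0 : (0:ℝ) ≤ x ^ k := pow_nonneg hx0.le k
    simp only [Real.norm_eq_abs, abs_mul]
    rw [abs_of_nonneg hxk0, abs_of_nonpos hlog, abs_two,
      abs_of_nonneg (Real.rpow_nonneg hx0.le _)]
    nlinarith

lemma aux_integral (k : ℕ) :
    ∫ x in (0:ℝ)..1, x ^ k * Real.log x = -(1 / ((k:ℝ) + 1) ^ 2) := by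
  set c : ℝ := (k : ℝ) + 1 with hc
  have hc0 : c ≠ 0 := by positivity
  set F : ℝ → ℝ := fun x => x ^ (k + 1) * (c * Real.log x - 1) / c ^ 2 with hF
  have hderiv : ∀ x ∈ Ioo (0:ℝ) 1, HasDerivAt F (x ^ k * Real.log x) x := by
    intro x hx
    have h1 : HasDerivAt (fun x : ℝ => x ^ (k + 1)) (((k:ℝ)+1) * x ^ k) x := by
      simpa using hasDerivAt_pow (k + 1) x
    have h2 : HasDerivAt (fun x : ℝ => c * Real.log x - 1) (c / x) x := by
      simpa [mul_comm, div_eq_mul_inv] using ((hasDerivAt_log hx.1.ne').const_mul c).sub_const 1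
    have := (h1.mul h2).div_const (c ^ 2)
    refine this.congr_deriv ?_
    have hxne : x ≠ 0 := hx.1.ne'
    field_simp
    ring
  have ha : Tendsto F (𝓝[>] (0:ℝ)) (𝓝 0) := by
    have h1 : Tendsto (fun x : ℝ => Real.log x * x ^ ((k:ℝ)+1)) (𝓝[>] (0:ℝ)) (𝓝 0) :=
      tendsto_log_mul_rpow_nhdsGT_zero (by positivity)
    have h2 : Tendsto (fun x : ℝ => x ^ (k+1)) (𝓝[>] (0:ℝ)) (𝓝 0) :=
      ((continuous_pow (k+1)).tendsto' 0 0 (by simp)).mono_left nhdsWithin_le_nhds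
    have h3 : Tendsto (fun x : ℝ => Real.log x * x ^ (k+1)) (𝓝[>] (0:ℝ)) (𝓝 0) := by
      refine h1.congr' ?_
      filter_upwards [self_mem_nhdsWithin] with x (hx : 0 < x)
      rw [← Real.rpow_natCast x (k+1)]
      push_cast
      ring_nf
    have : Tendsto (fun x : ℝ => (c * (Real.log x * x ^ (k+1)) - x ^ (k+1)) / c ^ 2)
        (𝓝[>] (0:ℝ)) (𝓝 ((c * 0 - 0) / c ^ 2)) := ((h3.const_mul c).sub h2).div_const _
    simpa using this.congr (fun x => by ring)
  have hb : Tendsto F (𝓝[<] (1:ℝ)) (𝓝 (-(1 / c ^ 2))) := by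
    have : ContinuousAt F 1 := by
      apply ContinuousAt.div_const
      exact (continuousAt_pow _ _).mul (((Real.continuousAt_log one_ne_zero).const_mul c).sub continuousAt_const)
    have h : Tendsto F (𝓝[<] (1:ℝ)) (𝓝 (F 1)) := this.continuousWithinAt (s := Iio (1:ℝ))
    have hF1 : F 1 = -(1 / c ^ 2) := by simp [hF, neg_div]
    rwa [hF1] at h
  have := intervalIntegral.integral_eq_sub_of_hasDerivAt_of_tendsto (by norm_num)
    hderiv (aux_integrable k) ha hb
  rw [this]
  simp [hc]
end Aux

/-- The regularized Mellin transform of `log(x)/(1-x)` gives the harmonic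
numbers of order 2: `∫₀¹ (xⁿ − 1)·log(x)/(1−x) dx = Σ_{i=1}^{n} 1/i²`. -/
theorem regularized_mellin_log_div_one_sub (n : ℕ) :
    ∫ x in (0:ℝ)..1, (x ^ n - 1) * (Real.log x / (1 - x)) =
      ∑ i ∈ Finset.Icc 1 n, 1 / (i : ℝ) ^ 2 := by
  have key : ∀ x : ℝ, (x ^ n - 1) * (Real.log x / (1 - x)) =
      ∑ k ∈ Finset.range n, -(x ^ k * Real.log x) := by
    intro x
    rcases eq_or_ne x 1 with h | h
    · simp [h]
    · have hx1 : x - 1 ≠ 0 := sub_ne_zero.mpr h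
      rw [Finset.sum_neg_distrib, ← Finset.sum_mul, ← neg_mul, geom_sum_eq h]
      have h1x : (1:ℝ) - x ≠ 0 := fun hz => hx1 (by linarith)
      field_simp
      ring
  simp_rw [key]
  rw [show (∫ x in (0:ℝ)..1, ∑ k ∈ Finset.range n, -(x ^ k * Real.log x)) =
      ∑ k ∈ Finset.range n, ∫ x in (0:ℝ)..1, -(x ^ k * Real.log x) from
    intervalIntegral.integral_finset_sum fun k _ => (aux_integrable k).neg]
  have : ∀ k ∈ Finset.range n, (∫ x in (0:ℝ)..1, -(x ^ k * Real.log x)) = 1 / ((k:ℝ) + 1) ^ 2 := by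
    intro k _
    rw [intervalIntegral.integral_neg, aux_integral k, neg_neg]
  rw [Finset.sum_congr rfl this, ← Finset.Ico_add_one_right_eq_Icc, Finset.sum_Ico_eq_sum_range]
  simp only [Nat.add_sub_cancel, Nat.succ_sub_one]
  refine Finset.sum_congr rfl fun i _ => ?_
  push_cast
  ring
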